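/- Let n ≥ 1 and work over ℂ. Let ξ_0,...,ξ_n be indeterminates with the SL(2,ℂ)-action coming from the binary form f = Σ_{k=0}^n C(n,k) ξ_k x^k y^{n-k} (i.e., for g ∈ SL(2,ℂ) with (x,y)ᵀ = g(x̄,ȳ)ᵀ, the ξ̄_k are defined by f = Σ C(n,k) ξ̄_k x̄^k ȳ^{n-k}). Let f_{k,n-k} be the bihomogeneous components of det(X+Y) for n×n indeterminate matrices X, Y, with SL(2,ℂ) acting by X ↦ αX+γY, Y ↦ βX+δY. Then the ℂ-algebra map ℂ[ξ_0,...,ξ_n] → ℂ[f_{n,0},...,f_{0,n}] sending C(n,k)·ξ_k ↦ f_{k,n-k} is an isomorphism of SL(2,ℂ)-modules (equivalently, of ℂ-algebras with compatible SL(2,ℂ)-actions). -/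

import Mathlib

open MvPolynomial Finset


lemma det_split {R : Type*} [CommRing R] {n : ℕ} (A B : Fin n → Fin n → R) :
    (Matrix.of fun i j => A i j + B i j).det =
      ∑ S ∈ (Finset.univ : Finset (Fin n)).powerset,
        (Matrix.of fun i j => if j ∈ S then A i j else B i j).det := by
  classical
  simp only [Matrix.det_apply']
  rw [Finset.sum_comm]
  refine Finset.sum_congr rfl fun σ _ => ?_
  simp only [Matrix.of_apply]
  rw [← Finset.mul_sum]
  congr 1
  rw [Finset.prod_add]
  refine Finset.sum_congr rfl fun S hS => ?_
  rw [Finset.prod_ite]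
  congr 1
  · apply Finset.prod_congr _ fun _ _ => rfl
    simp
  · apply Finset.prod_congr _ fun _ _ => rfl
    ext a
    simp

lemma det_xy {R : Type*} [CommRing R] {n : ℕ} (x y : R) (A B : Fin n → Fin n → R) :
    (Matrix.of fun i j => x * A i j + y * B i j).det =
      ∑ k ∈ Finset.range (n + 1), x ^ k * y ^ (n - k) *
        ∑ S ∈ Finset.powersetCard k (Finset.univ : Finset (Fin n)),
          (Matrix.of fun i j => if j ∈ S then A i j else B i j).det := by
  classical
  have hsplit : ∀ S : Finset (Fin n),
      (Matrix.of fun i j => if j ∈ S then x * A i j else y * B i j).det =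
        x ^ S.card * y ^ (n - S.card) *
          (Matrix.of fun i j => if j ∈ S then A i j else B i j).det := by
    intro S
    have h2 : (Matrix.of fun i j => if j ∈ S then x * A i j else y * B i j) =
        Matrix.of fun i j => (if j ∈ S then x else y) *
          ((Matrix.of fun i j => if j ∈ S then A i j else B i j) i j) := by
      ext i j
      simp only [Matrix.of_apply]
      split_ifs <;> ring
    rw [h2, Matrix.det_mul_row]
    congr 1
    rw [Finset.prod_ite, Finset.prod_const, Finset.prod_const]
    congr 2
    · simp
    · have : filter (fun x => x ∉ S) univ = Sᶜ := by
        ext a; simp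
      rw [this, Finset.card_compl]; simp
  have h1 := det_split (fun i j => x * A i j) (fun i j => y * B i j)
  rw [h1, Finset.powerset_card_biUnion, Finset.sum_biUnion, Finset.card_fin]
  · refine Finset.sum_congr rfl fun k hk => ?_
    rw [Finset.mul_sum]
    refine Finset.sum_congr rfl fun S hS => ?_
    rw [Finset.mem_powersetCard] at hS
    rw [hsplit S, hS.2]
  · intro a ha b hb hab
    simp only [Function.onFun]
    apply Finset.disjoint_left.mpr
    intro S hSa hSb
    rw [Finset.mem_powersetCard] at hSa hSb
    exact hab (hSa.2 ▸ hSb.2 ▸ rfl)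

lemma extract_coeffs {V : Type*} {n : ℕ} {p q : ℕ → MvPolynomial V ℂ}
    (h : ∑ k ∈ Finset.range (n + 1),
          rename (Sum.inl : V → V ⊕ Fin 2) (p k) * X (Sum.inr 0) ^ k *
            X (Sum.inr 1) ^ (n - k) =
        ∑ k ∈ Finset.range (n + 1),
          rename (Sum.inl : V → V ⊕ Fin 2) (q k) * X (Sum.inr 0) ^ k *
            X (Sum.inr 1) ^ (n - k)) :
    ∀ k, k ≤ n → p k = q k := by
  classical
  intro k hk
  apply MvPolynomial.ext
  intro m
  set D : ℕ → ((V ⊕ Fin 2) →₀ ℕ) := fun j =>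
    Finsupp.single (Sum.inr 0) j + Finsupp.single (Sum.inr 1) (n - j) with hD
  have hmap0 : ∀ i : Fin 2, (Finsupp.mapDomain (Sum.inl : V → V ⊕ Fin 2) m) (Sum.inr i) = 0 := by
    intro i
    apply Finsupp.mapDomain_notin_range
    rintro ⟨a, ha⟩
    exact Sum.inl_ne_inr ha
  have key : ∀ (r : MvPolynomial V ℂ) (j : ℕ), j ≤ n →
      coeff (Finsupp.mapDomain Sum.inl m + D k)
        (rename (Sum.inl : V → V ⊕ Fin 2) r * X (Sum.inr 0) ^ j * X (Sum.inr 1) ^ (n - j)) =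
      if j = k then coeff m r else 0 := by
    intro r j hj
    rw [mul_assoc, X_pow_eq_monomial, X_pow_eq_monomial, monomial_mul, mul_one,
      coeff_mul_monomial']
    by_cases hjk : j = k
    · subst hjk
      rw [if_pos, if_pos rfl, add_tsub_cancel_right,
        coeff_rename_mapDomain Sum.inl Sum.inl_injective, mul_one]
      exact le_add_self
    · rw [if_neg hjk, if_neg]
      intro hle
      have h0 := hle (Sum.inr 0)
      have h1 := hle (Sum.inr 1)
      simp only [hD, Finsupp.add_apply, Finsupp.single_apply, hmap0] at h0 h1
      norm_num at h0 h1
      omega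
  have hL := congrArg (coeff (Finsupp.mapDomain Sum.inl m + D k)) h
  rw [coeff_sum, coeff_sum] at hL
  have collapse : ∀ r : ℕ → MvPolynomial V ℂ,
      (∑ j ∈ Finset.range (n + 1),
        coeff (Finsupp.mapDomain Sum.inl m + D k)
          (rename (Sum.inl : V → V ⊕ Fin 2) (r j) * X (Sum.inr 0) ^ j *
            X (Sum.inr 1) ^ (n - j))) = coeff m (r k) := by
    intro r
    rw [Finset.sum_congr rfl fun j hj => key (r j) j (by
      rw [Finset.mem_range] at hj; omega)]
    rw [Finset.sum_ite_eq' (Finset.range (n + 1)) k fun j => coeff m (r j),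
      if_pos (Finset.mem_range.mpr (by omega))]
  rw [collapse p, collapse q] at hL
  exact hL

lemma compDet {R : Type*} [CommRing R] (x y : R) (u : ℕ → R) :
    ∀ m : ℕ,
    (Matrix.of fun i j : Fin (m + 1) =>
        x * (if (i : ℕ) = m then u (m + 1 - (j : ℕ))
             else if (j : ℕ) = (i : ℕ) + 1 then -1 else 0)
          + y * (if (i : ℕ) = m then (if (j : ℕ) = m then u 0 else 0)
                 else if (j : ℕ) = (i : ℕ) then 1 else 0)).det
      = ∑ k ∈ Finset.range (m + 2), u k * (x ^ k * y ^ (m + 1 - k)) := by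
  intro m
  induction m with
  | zero =>
      rw [Matrix.det_fin_one]
      simp [Finset.sum_range_succ]
      ring
  | succ m IH =>
      set A : Matrix (Fin (m + 2)) (Fin (m + 2)) R := Matrix.of fun i j =>
        x * (if (i : ℕ) = m + 1 then u (m + 2 - (j : ℕ))
             else if (j : ℕ) = (i : ℕ) + 1 then -1 else 0)
          + y * (if (i : ℕ) = m + 1 then (if (j : ℕ) = m + 1 then u 0 else 0)
                 else if (j : ℕ) = (i : ℕ) then 1 else 0) with hA
      rw [Matrix.det_succ_column_zero]
      rw [Fin.sum_univ_succ]
      -- the submatrix at row 0 equals the smaller companion matrix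
      have hsub0 : A.submatrix (Fin.succAbove 0) Fin.succ =
          Matrix.of fun i j : Fin (m + 1) =>
            x * (if (i : ℕ) = m then u (m + 1 - (j : ℕ))
                 else if (j : ℕ) = (i : ℕ) + 1 then -1 else 0)
              + y * (if (i : ℕ) = m then (if (j : ℕ) = m then u 0 else 0)
                     else if (j : ℕ) = (i : ℕ) then 1 else 0) := by
        ext i j
        have hij : Fin.succAbove 0 i = Fin.succ i := rfl
        simp only [Matrix.submatrix_apply, hij, hA, Matrix.of_apply, Fin.val_succ]
        have hj : (j : ℕ) ≤ m := by omega
        have hi : (i : ℕ) ≤ m := by omega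
        congr 1
        · congr 1
          by_cases h1 : (i : ℕ) + 1 = m + 1
          · rw [if_pos h1, if_pos (by omega : (i : ℕ) = m)]
            congr 1
            omega
          · rw [if_neg h1, if_neg (by omega : ¬ (i : ℕ) = m)]
            by_cases h2 : (j : ℕ) + 1 = (i : ℕ) + 1 + 1
            · rw [if_pos h2, if_pos (by omega : (j : ℕ) = (i : ℕ) + 1)]
            · rw [if_neg h2, if_neg (by omega : ¬ (j : ℕ) = (i : ℕ) + 1)]
        · congr 1
          by_cases h1 : (i : ℕ) + 1 = m + 1
          · rw [if_pos h1, if_pos (by omega : (i : ℕ) = m)]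
            by_cases h2 : (j : ℕ) + 1 = m + 1
            · rw [if_pos h2, if_pos (by omega : (j : ℕ) = m)]
            · rw [if_neg h2, if_neg (by omega : ¬ (j : ℕ) = m)]
          · rw [if_neg h1, if_neg (by omega : ¬ (i : ℕ) = m)]
            by_cases h2 : (j : ℕ) + 1 = (i : ℕ) + 1
            · rw [if_pos h2, if_pos (by omega : (j : ℕ) = (i : ℕ))]
            · rw [if_neg h2, if_neg (by omega : ¬ (j : ℕ) = (i : ℕ))]
      have hA00 : A 0 0 = y := by
        simp [hA]
      -- the sum over the remaining rows: only the last row contributes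
      have hzero : ∀ i : Fin (m + 1), i ≠ Fin.last m → A (Fin.succ i) 0 = 0 := by
        intro i hi
        have hi' : (i : ℕ) < m := by
          have := Fin.val_lt_last hi
          omega
        simp only [hA, Matrix.of_apply, Fin.val_succ, Fin.val_zero]
        simp only [show ¬ (0 = (i : ℕ) + 1 + 1) by omega, show ¬ (0 = (i : ℕ) + 1) by omega,
          show ¬ ((i : ℕ) + 1 = m + 1) by omega, ↓reduceIte]
        ring
      have hlastval : A (Fin.succ (Fin.last m)) 0 = x * u (m + 2) := by
        have h0 : ¬ (0 : ℕ) = m + 1 := by omega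
        simp [hA, h0]
      -- determinant of the minor at the last row
      have hminor : (A.submatrix (Fin.succAbove (Fin.succ (Fin.last m))) Fin.succ).det =
          (-x) ^ (m + 1) := by
        have hlast : Fin.succ (Fin.last m) = Fin.last (m + 1) := rfl
        rw [hlast, Fin.succAbove_last]
        have htri : (A.submatrix Fin.castSucc Fin.succ).BlockTriangular OrderDual.toDual := by
          intro i j hij
          have hij' : (i : ℕ) < (j : ℕ) := hij
          simp only [Matrix.submatrix_apply, hA, Matrix.of_apply, Fin.coe_castSucc,
            Fin.val_succ]
          rw [if_neg (by omega), if_neg (by omega), if_neg (by omega), if_neg (by omega)]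
          ring
        rw [Matrix.det_of_lowerTriangular _ htri]
        have hdiag : ∀ i : Fin (m + 1), A.submatrix Fin.castSucc Fin.succ i i = -x := by
          intro i
          have hi : (i : ℕ) ≤ m := by omega
          simp only [Matrix.submatrix_apply, hA, Matrix.of_apply, Fin.coe_castSucc,
            Fin.val_succ]
          rw [if_neg (by omega : ¬ (i : ℕ) = m + 1), if_neg (by omega : ¬ (i : ℕ) + 1 = (i : ℕ))]
          norm_num
          intro h1
          exact absurd h1 (by omega)
        rw [Finset.prod_congr rfl fun i _ => hdiag i, Finset.prod_const]
        simp
      -- collapse the tail sum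
      have htail : (∑ i : Fin (m + 1), (-1 : R) ^ ((Fin.succ i : Fin (m + 2)) : ℕ) *
            A (Fin.succ i) 0 * (A.submatrix (Fin.succAbove (Fin.succ i)) Fin.succ).det) =
          u (m + 2) * (x ^ (m + 2) * y ^ 0) := by
        rw [Finset.sum_eq_single_of_mem (Fin.last m) (Finset.mem_univ _)]
        · rw [hlastval, hminor]
          simp only [Fin.val_succ, Fin.val_last, pow_zero, mul_one]
          have hmp : ((-1 : R)) ^ (m + 1) * (-x) ^ (m + 1) = x ^ (m + 1) := by
            rw [← mul_pow]
            norm_num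
          calc ((-1 : R)) ^ (m + 1) * (x * u (m + 2)) * (-x) ^ (m + 1)
              = ((-1 : R)) ^ (m + 1) * (-x) ^ (m + 1) * (x * u (m + 2)) := by ring
            _ = x ^ (m + 1) * (x * u (m + 2)) := by rw [hmp]
            _ = u (m + 2) * x ^ (m + 2) := by ring
        · intro b _ hb
          rw [hzero b hb]
          ring
      rw [htail, hsub0, IH, hA00]
      rw [Fin.val_zero, pow_zero, one_mul]
      rw [Finset.sum_range_succ (fun k => u k * (x ^ k * y ^ (m + 2 - k))) (m + 2)]
      rw [Nat.sub_self, Finset.mul_sum]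
      congr 1
      · refine Finset.sum_congr rfl fun k hk => ?_
        rw [Finset.mem_range] at hk
        have hy : y * y ^ (m + 1 - k) = y ^ (m + 2 - k) := by
          rw [← pow_succ']
          congr 1
          omega
        calc y * (u k * (x ^ k * y ^ (m + 1 - k)))
            = u k * (x ^ k * (y * y ^ (m + 1 - k))) := by ring
          _ = u k * (x ^ k * y ^ (m + 2 - k)) := by rw [hy]

/-- The bihomogeneous component f_{k,n-k} of det(X+Y), X = (T_{ij0}), Y = (T_{ij1}). -/
noncomputable def fPoly (n k : ℕ) : MvPolynomial (Fin n × Fin n × Fin 2) ℂ :=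
  ∑ S ∈ Finset.powersetCard k (Finset.univ : Finset (Fin n)),
    (Matrix.of fun i j =>
        if j ∈ S then
          (MvPolynomial.X (i, j, (0 : Fin 2)) : MvPolynomial (Fin n × Fin n × Fin 2) ℂ)
        else MvPolynomial.X (i, j, (1 : Fin 2))).det

lemma fPoly_map {R : Type*} [CommRing R] {n : ℕ}
    (φ : MvPolynomial (Fin n × Fin n × Fin 2) ℂ →+* R) (x y : R) :
    (Matrix.of fun i j => x * φ (X (i, j, 0)) + y * φ (X (i, j, 1))).det =
      ∑ k ∈ Finset.range (n + 1), x ^ k * y ^ (n - k) * φ (fPoly n k) := by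
  rw [det_xy]
  refine Finset.sum_congr rfl fun k _ => ?_
  congr 1
  rw [fPoly, map_sum]
  refine Finset.sum_congr rfl fun S _ => ?_
  rw [RingHom.map_det]
  congr 1
  ext i j
  simp [apply_ite φ]

noncomputable def uu (n : ℕ) : ℕ → MvPolynomial (Fin (n + 1)) ℂ := fun m =>
  if h : m < n + 1 then X ⟨m, h⟩ else 0

noncomputable def epsHom (n : ℕ) :
    MvPolynomial (Fin n × Fin n × Fin 2) ℂ →ₐ[ℂ] MvPolynomial (Fin (n + 1)) ℂ :=
  aeval fun v : Fin n × Fin n × Fin 2 =>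
    if v.2.2 = 0 then
      (if (v.1 : ℕ) = n - 1 then uu n (n - (v.2.1 : ℕ))
       else if (v.2.1 : ℕ) = (v.1 : ℕ) + 1 then -1 else 0)
    else
      (if (v.1 : ℕ) = n - 1 then (if (v.2.1 : ℕ) = n - 1 then uu n 0 else 0)
       else if (v.2.1 : ℕ) = (v.1 : ℕ) then 1 else 0)

lemma eps_fPoly (n : ℕ) (hn : 1 ≤ n) : ∀ k, k ≤ n → epsHom n (fPoly n k) = uu n k := by
  obtain ⟨m, rfl⟩ : ∃ m, n = m + 1 := ⟨n - 1, by omega⟩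
  set x : MvPolynomial (Fin (m + 1 + 1) ⊕ Fin 2) ℂ := X (Sum.inr 0) with hx
  set y : MvPolynomial (Fin (m + 1 + 1) ⊕ Fin 2) ℂ := X (Sum.inr 1) with hy
  set ρ : MvPolynomial (Fin (m + 1 + 1)) ℂ →ₐ[ℂ] MvPolynomial (Fin (m + 1 + 1) ⊕ Fin 2) ℂ :=
    rename Sum.inl with hρ
  set φ : MvPolynomial (Fin (m + 1) × Fin (m + 1) × Fin 2) ℂ →+*
      MvPolynomial (Fin (m + 1 + 1) ⊕ Fin 2) ℂ :=
    (ρ.comp (epsHom (m + 1))).toRingHom with hφ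
  apply extract_coeffs (n := m + 1)
  have hL := fPoly_map φ x y
  have hR := compDet x y (fun j => ρ (uu (m + 1) j)) m
  have hent : (Matrix.of fun i j : Fin (m + 1) =>
        x * φ (X (i, j, 0)) + y * φ (X (i, j, 1))) =
      Matrix.of fun i j : Fin (m + 1) =>
        x * (if (i : ℕ) = m then ρ (uu (m + 1) (m + 1 - (j : ℕ)))
             else if (j : ℕ) = (i : ℕ) + 1 then -1 else 0)
          + y * (if (i : ℕ) = m then (if (j : ℕ) = m then ρ (uu (m + 1) 0) else 0)
                 else if (j : ℕ) = (i : ℕ) then 1 else 0) := by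
    apply Matrix.ext
    intro i j
    show x * ρ (epsHom (m + 1) (X (i, j, 0))) + y * ρ (epsHom (m + 1) (X (i, j, 1))) = _
    have h0 : epsHom (m + 1) (X (i, j, 0)) =
        (if (i : ℕ) = m then uu (m + 1) (m + 1 - (j : ℕ))
         else if (j : ℕ) = (i : ℕ) + 1 then -1 else 0) := by
      rw [epsHom, aeval_X]
      simp
    have h1 : epsHom (m + 1) (X (i, j, 1)) =
        (if (i : ℕ) = m then (if (j : ℕ) = m then uu (m + 1) 0 else 0)
         else if (j : ℕ) = (i : ℕ) then 1 else 0) := by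
      rw [epsHom, aeval_X]
      simp
    rw [h0, h1]
    simp only [Matrix.of_apply, apply_ite ρ, map_neg, map_one, map_zero]
  have key : (∑ k ∈ Finset.range (m + 1 + 1),
        x ^ k * y ^ (m + 1 - k) * φ (fPoly (m + 1) k)) =
      ∑ k ∈ Finset.range (m + 2), ρ (uu (m + 1) k) * (x ^ k * y ^ (m + 1 - k)) := by
    rw [← hL, ← hR, hent]
  refine (Finset.sum_congr rfl fun k _ => ?_).trans
    (key.trans (Finset.sum_congr rfl fun k _ => ?_))
  · show rename Sum.inl (epsHom (m + 1) (fPoly (m + 1) k)) * x ^ k * y ^ (m + 1 - k) =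
      x ^ k * y ^ (m + 1 - k) * φ (fPoly (m + 1) k)
    rw [show (rename (Sum.inl : Fin (m + 1 + 1) → Fin (m + 1 + 1) ⊕ Fin 2))
        (epsHom (m + 1) (fPoly (m + 1) k)) = φ (fPoly (m + 1) k) from rfl]
    ring
  · show ρ (uu (m + 1) k) * (x ^ k * y ^ (m + 1 - k)) =
      rename Sum.inl (uu (m + 1) k) * x ^ k * y ^ (m + 1 - k)
    rw [hρ, mul_assoc]


/-- The map ℂ[ξ₀,...,ξ_n] → ℂ[X,Y] sending C(n,k)·ξ_k to f_{k,n-k}. -/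
noncomputable def psiMap (n : ℕ) :
    MvPolynomial (Fin (n + 1)) ℂ →ₐ[ℂ] MvPolynomial (Fin n × Fin n × Fin 2) ℂ :=
  MvPolynomial.aeval fun k : Fin (n + 1) =>
    MvPolynomial.C ((n.choose (k : ℕ) : ℂ))⁻¹ * fPoly n (k : ℕ)

lemma choose_ne (n : ℕ) (k : Fin (n + 1)) : ((n.choose (k : ℕ) : ℂ)) ≠ 0 := by
  exact_mod_cast (Nat.choose_pos (by omega : (k : ℕ) ≤ n)).ne'

lemma eps_comp_psi (n : ℕ) (hn : 1 ≤ n) :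
    (epsHom n).comp (psiMap n) =
      aeval (fun k : Fin (n + 1) => C ((n.choose (k : ℕ) : ℂ))⁻¹ * X k) := by
  rw [psiMap, comp_aeval]
  congr 1
  funext k
  rw [map_mul]
  have h1 : epsHom n (C ((n.choose (k : ℕ) : ℂ))⁻¹) = C ((n.choose (k : ℕ) : ℂ))⁻¹ := by
    rw [epsHom, aeval_C, algebraMap_eq]
  rw [h1, eps_fPoly n hn (k : ℕ) (by omega), uu, dif_pos k.isLt, Fin.eta]

lemma psi_inj (n : ℕ) (hn : 1 ≤ n) : Function.Injective ⇑(psiMap n) := by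
  have hcomp : (aeval (fun k : Fin (n + 1) => C ((n.choose (k : ℕ) : ℂ)) * X k)).comp
      (aeval (fun k : Fin (n + 1) => C ((n.choose (k : ℕ) : ℂ))⁻¹ * X k)) =
      AlgHom.id ℂ (MvPolynomial (Fin (n + 1)) ℂ) := by
    apply algHom_ext
    intro k
    rw [AlgHom.comp_apply, aeval_X, AlgHom.id_apply, map_mul, aeval_C, aeval_X,
      algebraMap_eq, ← mul_assoc, ← C_mul, inv_mul_cancel₀ (choose_ne n k), C_1, one_mul]
  intro p q hpq
  have h2 := congrArg (epsHom n) hpq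
  rw [show epsHom n (psiMap n p) = aeval (fun k : Fin (n + 1) =>
      C ((n.choose (k : ℕ) : ℂ))⁻¹ * X k) p from AlgHom.congr_fun (eps_comp_psi n hn) p,
    show epsHom n (psiMap n q) = aeval (fun k : Fin (n + 1) =>
      C ((n.choose (k : ℕ) : ℂ))⁻¹ * X k) q from AlgHom.congr_fun (eps_comp_psi n hn) q] at h2
  have h3 := congrArg (aeval (fun k : Fin (n + 1) => C ((n.choose (k : ℕ) : ℂ)) * X k)) h2
  rwa [show ∀ r, (aeval (fun k : Fin (n + 1) => C ((n.choose (k : ℕ) : ℂ)) * X k))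
      ((aeval (fun k : Fin (n + 1) => C ((n.choose (k : ℕ) : ℂ))⁻¹ * X k)) r) = r from
    fun r => (AlgHom.congr_fun hcomp r), show ∀ r, (aeval (fun k : Fin (n + 1) =>
      C ((n.choose (k : ℕ) : ℂ)) * X k))
      ((aeval (fun k : Fin (n + 1) => C ((n.choose (k : ℕ) : ℂ))⁻¹ * X k)) r) = r from
    fun r => (AlgHom.congr_fun hcomp r)] at h3

lemma psi_range (n : ℕ) :
    (psiMap n).range =
      Algebra.adjoin ℂ (Set.range fun k : Fin (n + 1) => fPoly n (k : ℕ)) := by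
  rw [psiMap, ← Algebra.adjoin_range_eq_range_aeval]
  apply le_antisymm
  · apply Algebra.adjoin_le
    rintro _ ⟨k, rfl⟩
    have h1 : fPoly n (k : ℕ) ∈
        Algebra.adjoin ℂ (Set.range fun k : Fin (n + 1) => fPoly n (k : ℕ)) :=
      Algebra.subset_adjoin ⟨k, rfl⟩
    have h2 := Subalgebra.smul_mem _ h1 ((n.choose (k : ℕ) : ℂ))⁻¹
    rwa [Algebra.smul_def, algebraMap_eq] at h2
  · apply Algebra.adjoin_le
    rintro _ ⟨k, rfl⟩
    have h1 : (C ((n.choose (k : ℕ) : ℂ))⁻¹ * fPoly n (k : ℕ)) ∈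
        Algebra.adjoin ℂ (Set.range fun k : Fin (n + 1) =>
          C ((n.choose (k : ℕ) : ℂ))⁻¹ * fPoly n (k : ℕ)) :=
      Algebra.subset_adjoin ⟨k, rfl⟩
    have h2 := Subalgebra.smul_mem _ h1 ((n.choose (k : ℕ) : ℂ))
    rwa [Algebra.smul_def, algebraMap_eq, ← mul_assoc, ← C_mul,
      mul_inv_cancel₀ (choose_ne n k), C_1, one_mul] at h2

/-- The action of g = ((α,β),(γ,δ)) ∈ SL(2,ℂ) on ℂ[X,Y]: X ↦ αX + γY, Y ↦ βX + δY. -/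
noncomputable def sl2Action (n : ℕ) (α β γ δ : ℂ) :
    MvPolynomial (Fin n × Fin n × Fin 2) ℂ →ₐ[ℂ] MvPolynomial (Fin n × Fin n × Fin 2) ℂ :=
  MvPolynomial.aeval fun v : Fin n × Fin n × Fin 2 =>
    if v.2.2 = 0 then
      MvPolynomial.C α * MvPolynomial.X (v.1, v.2.1, (0 : Fin 2)) +
        MvPolynomial.C γ * MvPolynomial.X (v.1, v.2.1, (1 : Fin 2))
    else
      MvPolynomial.C β * MvPolynomial.X (v.1, v.2.1, (0 : Fin 2)) +
        MvPolynomial.C δ * MvPolynomial.X (v.1, v.2.1, (1 : Fin 2))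

open Fin.NatCast in
lemma psi_equiv (n : ℕ) (hn : 1 ≤ n) (α β γ δ : ℂ)
    (σg : MvPolynomial (Fin (n + 1)) ℂ →ₐ[ℂ] MvPolynomial (Fin (n + 1)) ℂ)
    (h : ∑ k : Fin (n + 1),
            MvPolynomial.C ((n.choose (k : ℕ) : ℂ)) *
              MvPolynomial.rename Sum.inl (σg (MvPolynomial.X k)) *
              (MvPolynomial.X (Sum.inr 0) :
                MvPolynomial (Fin (n + 1) ⊕ Fin 2) ℂ) ^ (k : ℕ) *
              MvPolynomial.X (Sum.inr 1) ^ (n - (k : ℕ)) =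
          ∑ k : Fin (n + 1),
            MvPolynomial.C ((n.choose (k : ℕ) : ℂ)) *
              MvPolynomial.rename Sum.inl (MvPolynomial.X k) *
              (MvPolynomial.C α * MvPolynomial.X (Sum.inr 0) +
                MvPolynomial.C β * MvPolynomial.X (Sum.inr 1)) ^ (k : ℕ) *
              (MvPolynomial.C γ * MvPolynomial.X (Sum.inr 0) +
                MvPolynomial.C δ * MvPolynomial.X (Sum.inr 1)) ^ (n - (k : ℕ))) :
    (psiMap n).comp σg = (sl2Action n α β γ δ).comp (psiMap n) := by
  classical
  set x : MvPolynomial ((Fin n × Fin n × Fin 2) ⊕ Fin 2) ℂ := X (Sum.inr 0) with hxdef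
  set y : MvPolynomial ((Fin n × Fin n × Fin 2) ⊕ Fin 2) ℂ := X (Sum.inr 1) with hydef
  set Φ : MvPolynomial (Fin (n + 1) ⊕ Fin 2) ℂ →ₐ[ℂ]
      MvPolynomial ((Fin n × Fin n × Fin 2) ⊕ Fin 2) ℂ :=
    aeval (Sum.elim
      (fun k : Fin (n + 1) =>
        rename (Sum.inl : (Fin n × Fin n × Fin 2) → (Fin n × Fin n × Fin 2) ⊕ Fin 2)
          (psiMap n (X k)))
      (fun i : Fin 2 => X (Sum.inr i))) with hΦdef
  have hΦren : ∀ p : MvPolynomial (Fin (n + 1)) ℂ,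
      Φ (rename Sum.inl p) = rename Sum.inl (psiMap n p) := by
    intro p
    rw [hΦdef, aeval_rename]
    have h2 : (rename (Sum.inl : (Fin n × Fin n × Fin 2) → (Fin n × Fin n × Fin 2) ⊕ Fin 2)).comp
        (psiMap n) = aeval ((Sum.elim
          (fun k : Fin (n + 1) => rename
            (Sum.inl : (Fin n × Fin n × Fin 2) → (Fin n × Fin n × Fin 2) ⊕ Fin 2)
            (psiMap n (X k)))
          (fun i : Fin 2 => X (Sum.inr i))) ∘ Sum.inl) := by
      rw [psiMap, comp_aeval]
      congr 1
      funext k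
      show rename Sum.inl (C ((n.choose (k : ℕ) : ℂ))⁻¹ * fPoly n (k : ℕ)) =
        rename Sum.inl (psiMap n (X k))
      rw [psiMap, aeval_X]
    exact (AlgHom.congr_fun h2 p).symm
  have hΦX : ∀ i : Fin 2, Φ (X (Sum.inr i)) = X (Sum.inr i) := by
    intro i
    rw [hΦdef, aeval_X, Sum.elim_inr]
  have hΦC : ∀ a : ℂ, Φ (C a) = C a := by
    intro a
    rw [hΦdef, aeval_C, algebraMap_eq]
  have hh := congrArg Φ h
  rw [map_sum, map_sum] at hh
  have hL' : ∀ k : Fin (n + 1),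
      Φ (C ((n.choose (k : ℕ) : ℂ)) * rename Sum.inl (σg (X k)) *
          X (Sum.inr 0) ^ (k : ℕ) * X (Sum.inr 1) ^ (n - (k : ℕ))) =
        C ((n.choose (k : ℕ) : ℂ)) * rename Sum.inl (psiMap n (σg (X k))) *
          x ^ (k : ℕ) * y ^ (n - (k : ℕ)) := by
    intro k
    rw [map_mul, map_mul, map_mul, map_pow, map_pow, hΦC, hΦX, hΦX, hΦren]
  have hR' : ∀ k : Fin (n + 1),
      Φ (C ((n.choose (k : ℕ) : ℂ)) * rename Sum.inl (X k) *
          (C α * X (Sum.inr 0) + C β * X (Sum.inr 1)) ^ (k : ℕ) *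
          (C γ * X (Sum.inr 0) + C δ * X (Sum.inr 1)) ^ (n - (k : ℕ))) =
        rename Sum.inl (fPoly n (k : ℕ)) *
          (C α * x + C β * y) ^ (k : ℕ) * (C γ * x + C δ * y) ^ (n - (k : ℕ)) := by
    intro k
    rw [map_mul, map_mul, map_mul, map_pow, map_pow, map_add, map_add,
      map_mul, map_mul, map_mul, map_mul, hΦC, hΦC, hΦC, hΦC, hΦC, hΦX, hΦX, hΦren]
    have : psiMap n (X k) = C ((n.choose (k : ℕ) : ℂ))⁻¹ * fPoly n (k : ℕ) := by
      rw [psiMap, aeval_X]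
    rw [this, map_mul, rename_C, ← mul_assoc, ← C_mul,
      mul_inv_cancel₀ (choose_ne n k), C_1, one_mul]
  rw [Finset.sum_congr rfl fun k _ => hL' k, Finset.sum_congr rfl fun k _ => hR' k] at hh
  -- the det identity (†)
  have hdag : (∑ k ∈ Finset.range (n + 1),
        (C α * x + C β * y) ^ k * (C γ * x + C δ * y) ^ (n - k) *
          rename Sum.inl (fPoly n k)) =
      ∑ k ∈ Finset.range (n + 1), x ^ k * y ^ (n - k) *
        rename Sum.inl (sl2Action n α β γ δ (fPoly n k)) := by
    have hD1 := fPoly_map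
      ((rename (Sum.inl : (Fin n × Fin n × Fin 2) → (Fin n × Fin n × Fin 2) ⊕ Fin 2) :
        MvPolynomial (Fin n × Fin n × Fin 2) ℂ →ₐ[ℂ] _)).toRingHom
      (C α * x + C β * y) (C γ * x + C δ * y)
    have hD2 := fPoly_map
      (((rename (Sum.inl : (Fin n × Fin n × Fin 2) → (Fin n × Fin n × Fin 2) ⊕ Fin 2) :
        MvPolynomial (Fin n × Fin n × Fin 2) ℂ →ₐ[ℂ] _)).comp
          (sl2Action n α β γ δ)).toRingHom x y
    have hent : (Matrix.of fun i j : Fin n =>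
          (C α * x + C β * y) * (rename Sum.inl (X (i, j, 0)) :
              MvPolynomial ((Fin n × Fin n × Fin 2) ⊕ Fin 2) ℂ) +
            (C γ * x + C δ * y) * rename Sum.inl (X (i, j, 1))) =
        Matrix.of fun i j : Fin n =>
          x * rename Sum.inl (sl2Action n α β γ δ (X (i, j, 0))) +
            y * rename Sum.inl (sl2Action n α β γ δ (X (i, j, 1))) := by
      apply Matrix.ext
      intro i j
      have e0 : sl2Action n α β γ δ (X (i, j, 0)) =
          C α * X (i, j, (0 : Fin 2)) + C γ * X (i, j, (1 : Fin 2)) := by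
        rw [sl2Action, aeval_X, if_pos rfl]
      have e1 : sl2Action n α β γ δ (X (i, j, 1)) =
          C β * X (i, j, (0 : Fin 2)) + C δ * X (i, j, (1 : Fin 2)) := by
        rw [sl2Action, aeval_X, if_neg (show ¬ ((1 : Fin 2) = 0) by decide)]
      rw [Matrix.of_apply, Matrix.of_apply, e0, e1, map_add, map_add, map_mul, map_mul,
        map_mul, map_mul, rename_C, rename_C, rename_C, rename_C, rename_X, rename_X]
      ring
    rw [show (∑ k ∈ Finset.range (n + 1),
        (C α * x + C β * y) ^ k * (C γ * x + C δ * y) ^ (n - k) *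
          rename Sum.inl (fPoly n k)) = (Matrix.of fun i j : Fin n =>
          (C α * x + C β * y) * (rename Sum.inl (X (i, j, 0)) :
              MvPolynomial ((Fin n × Fin n × Fin 2) ⊕ Fin 2) ℂ) +
            (C γ * x + C δ * y) * rename Sum.inl (X (i, j, 1))).det from hD1.symm,
      hent]
    exact hD2
  -- extraction
  have hext : ∀ k, k ≤ n →
      (fun m => C ((n.choose m : ℂ)) * psiMap n (σg (X (m : Fin (n + 1))))) k =
      (fun m => sl2Action n α β γ δ (fPoly n m)) k := by
    apply extract_coeffs (n := n)
    calc ∑ m ∈ Finset.range (n + 1),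
          rename (Sum.inl : (Fin n × Fin n × Fin 2) → (Fin n × Fin n × Fin 2) ⊕ Fin 2)
            (C ((n.choose m : ℂ)) * psiMap n (σg (X (m : Fin (n + 1))))) *
            X (Sum.inr 0) ^ m * X (Sum.inr 1) ^ (n - m)
        = ∑ k : Fin (n + 1),
            C ((n.choose (k : ℕ) : ℂ)) * rename Sum.inl (psiMap n (σg (X k))) *
              x ^ (k : ℕ) * y ^ (n - (k : ℕ)) := by
          rw [← Fin.sum_univ_eq_sum_range]
          refine Finset.sum_congr rfl fun k _ => ?_
          rw [Fin.cast_val_eq_self, map_mul, rename_C]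
      _ = ∑ k : Fin (n + 1),
            rename Sum.inl (fPoly n (k : ℕ)) *
              (C α * x + C β * y) ^ (k : ℕ) * (C γ * x + C δ * y) ^ (n - (k : ℕ)) := hh
      _ = ∑ m ∈ Finset.range (n + 1),
            (C α * x + C β * y) ^ m * (C γ * x + C δ * y) ^ (n - m) *
              rename Sum.inl (fPoly n m) := by
          rw [← Fin.sum_univ_eq_sum_range]
          refine Finset.sum_congr rfl fun k _ => ?_
          ring
      _ = ∑ m ∈ Finset.range (n + 1), x ^ m * y ^ (n - m) *
            rename Sum.inl (sl2Action n α β γ δ (fPoly n m)) := hdag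
      _ = ∑ m ∈ Finset.range (n + 1),
            rename (Sum.inl : (Fin n × Fin n × Fin 2) → (Fin n × Fin n × Fin 2) ⊕ Fin 2)
              (sl2Action n α β γ δ (fPoly n m)) * X (Sum.inr 0) ^ m *
              X (Sum.inr 1) ^ (n - m) := by
          refine Finset.sum_congr rfl fun m _ => ?_
          ring
  apply algHom_ext
  intro k
  rw [AlgHom.comp_apply, AlgHom.comp_apply]
  have hk := hext (k : ℕ) (by omega)
  simp only [Fin.cast_val_eq_self] at hk
  have hpsiX : psiMap n (X k) = C ((n.choose (k : ℕ) : ℂ))⁻¹ * fPoly n (k : ℕ) := by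
    rw [psiMap, aeval_X]
  rw [hpsiX, map_mul]
  have hslC : sl2Action n α β γ δ (C ((n.choose (k : ℕ) : ℂ))⁻¹) =
      C ((n.choose (k : ℕ) : ℂ))⁻¹ := by
    rw [sl2Action, aeval_C, algebraMap_eq]
  rw [hslC, ← hk, ← mul_assoc, ← C_mul, inv_mul_cancel₀ (choose_ne n k), C_1, one_mul]

/-- the ℂ-algebra map ℂ[ξ₀,...,ξ_n] → ℂ[f_{n,0},...,f_{0,n}] sending
C(n,k)·ξ_k ↦ f_{k,n-k} is an isomorphism of SL(2,ℂ)-modules: it is injective with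
image exactly ℂ[f_{n,0},...,f_{0,n}], and it intertwines the classical SL(2,ℂ)-action
on binary-form coefficients (the algebra map σ_g determined by
Σ C(n,k) σ_g(ξ_k) x̄^k ȳ^{n-k} = Σ C(n,k) ξ_k (αx̄+βȳ)^k (γx̄+δȳ)^{n-k}) with the
action X ↦ αX+γY, Y ↦ βX+δY on ℂ[X,Y]. -/
theorem psi_equivariant_isomorphism (n : ℕ) (hn : 1 ≤ n) :
    Function.Injective (psiMap n) ∧
    (psiMap n).range =
      Algebra.adjoin ℂ (Set.range fun k : Fin (n + 1) => fPoly n (k : ℕ)) ∧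
    ∀ (α β γ δ : ℂ), α * δ - β * γ = 1 →
      ∀ σg : MvPolynomial (Fin (n + 1)) ℂ →ₐ[ℂ] MvPolynomial (Fin (n + 1)) ℂ,
        (∑ k : Fin (n + 1),
            MvPolynomial.C ((n.choose (k : ℕ) : ℂ)) *
              MvPolynomial.rename Sum.inl (σg (MvPolynomial.X k)) *
              (MvPolynomial.X (Sum.inr 0) :
                MvPolynomial (Fin (n + 1) ⊕ Fin 2) ℂ) ^ (k : ℕ) *
              MvPolynomial.X (Sum.inr 1) ^ (n - (k : ℕ)) =
          ∑ k : Fin (n + 1),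
            MvPolynomial.C ((n.choose (k : ℕ) : ℂ)) *
              MvPolynomial.rename Sum.inl (MvPolynomial.X k) *
              (MvPolynomial.C α * MvPolynomial.X (Sum.inr 0) +
                MvPolynomial.C β * MvPolynomial.X (Sum.inr 1)) ^ (k : ℕ) *
              (MvPolynomial.C γ * MvPolynomial.X (Sum.inr 0) +
                MvPolynomial.C δ * MvPolynomial.X (Sum.inr 1)) ^ (n - (k : ℕ))) →
        (psiMap n).comp σg = (sl2Action n α β γ δ).comp (psiMap n) := by
  exact ⟨psi_inj n hn, psi_range n, fun α β γ δ _ σg h => psi_equiv n hn α β γ δ σg h⟩
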